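/- In case 1), with R defined as above (for either value of s ∈ {1,-1}; R does not depend on s) and with g = diag(t, -t⁻¹, -t⁻¹, -t) regarded as the vector (g^{ij})_{i,j=0}^{3} ∈ ℂ¹⁶, one has Rg = g, i.e. Σ_{k,l=0}^{3} R^{ij}_{kl} g^{kl} = g^{ij} for all i,j ∈ {0,1,2,3}. -/

import Mathlib

open Matrix Complex Kronecker

noncomputable section

/-- The Pauli matrices σ₀, σ₁, σ₂, σ₃ (indices A,B ∈ {1,2} become 0,1). -/
def pauli : Fin 4 → Matrix (Fin 2) (Fin 2) ℂ :=
  ![!![1, 0; 0, 1], !![0, 1; 1, 0], !![0, -I; I, 0], !![1, 0; 0, -1]]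

/-- The matrix V, V^{AB}_i = (σ_i)_{AB}. -/
def Vmat : Matrix (Fin 2 × Fin 2) (Fin 4) ℂ :=
  Matrix.of fun p i => pauli i p.1 p.2

/-- The matrix V⁻¹, (V⁻¹)^i_{AB} = ½ (σ_i)_{BA}. -/
def Vinv : Matrix (Fin 4) (Fin 2 × Fin 2) ℂ :=
  Matrix.of fun i p => (1 / 2 : ℂ) * pauli i p.2 p.1

/-- Identification of the ordered basis e₁⊗e₁, e₁⊗e₂, e₂⊗e₁, e₂⊗e₂ of ℂ²⊗ℂ²
with the indices 0,1,2,3. -/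
def pidx (p : Fin 2 × Fin 2) : Fin 4 :=
  ⟨2 * p.1.val + p.2.val, by have := p.1.isLt; have := p.2.isLt; omega⟩

/-- Reading a 4×4 matrix as a matrix on ℂ²⊗ℂ² (w.r.t. the basis order above). -/
def toPair (Q : Matrix (Fin 4) (Fin 4) ℂ) : Matrix (Fin 2 × Fin 2) (Fin 2 × Fin 2) ℂ :=
  Matrix.of fun p p' => Q (pidx p) (pidx p')

/-- The flip τ(u⊗v) = v⊗u on ℂ²⊗ℂ² as a 4×4 matrix. -/
def flipM : Matrix (Fin 2 × Fin 2) (Fin 2 × Fin 2) ℂ :=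
  Matrix.of fun p p' => if p.1 = p'.2 ∧ p.2 = p'.1 then 1 else 0

/-- L = s q^{1/2} (1₄ + q E E'), where `Ev` is the column vector E and `Ep` the row covector E'. -/
def Lmat (s sqrtq q : ℂ) (Ev Ep : Fin 2 × Fin 2 → ℂ) :
    Matrix (Fin 2 × Fin 2) (Fin 2 × Fin 2) ℂ :=
  Matrix.of fun p p' => s * sqrtq * ((if p = p' then 1 else 0) + q * Ev p * Ep p')

/-- 1₂⊗Y⊗1₂, acting on the middle two tensor factors of ℂ²⊗ℂ²⊗ℂ²⊗ℂ². -/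
def midX (Y : Matrix (Fin 2 × Fin 2) (Fin 2 × Fin 2) ℂ) :
    Matrix ((Fin 2 × Fin 2) × (Fin 2 × Fin 2)) ((Fin 2 × Fin 2) × (Fin 2 × Fin 2)) ℂ :=
  Matrix.of fun p p' =>
    (if p.1.1 = p'.1.1 then 1 else 0) * Y (p.1.2, p.2.1) (p'.1.2, p'.2.1) *
      (if p.2.2 = p'.2.2 then 1 else 0)

/-- R = (V⁻¹⊗V⁻¹)(1₂⊗X⊗1₂)(L⊗L̃)(1₂⊗X⁻¹⊗1₂)(V⊗V), with L̃ = q τ L τ. -/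
def Rmat (s sqrtq q : ℂ) (Ev Ep : Fin 2 × Fin 2 → ℂ)
    (X : Matrix (Fin 2 × Fin 2) (Fin 2 × Fin 2) ℂ) :
    Matrix (Fin 4 × Fin 4) (Fin 4 × Fin 4) ℂ :=
  (Vinv ⊗ₖ Vinv) * midX X *
    (Lmat s sqrtq q Ev Ep ⊗ₖ (q • (flipM * Lmat s sqrtq q Ev Ep * flipM))) *
    midX X⁻¹ * (Vmat ⊗ₖ Vmat)


namespace RCase1Aux

set_option maxHeartbeats 1000000

/-- explicit form of w₁ = (V⊗V)·g -/
def w1v (t : ℂ) : (Fin 2 × Fin 2) × (Fin 2 × Fin 2) → ℂ := fun p =>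
  if p = ((0,0),(1,1)) ∨ p = ((1,1),(0,0)) then 2*t
  else if p = ((0,1),(1,0)) ∨ p = ((1,0),(0,1)) then -2*t⁻¹ else 0

/-- explicit form of w₂ = (1⊗X⁻¹⊗1)·w₁ = 2·E⊗E -/
def w2v : (Fin 2 × Fin 2) × (Fin 2 × Fin 2) → ℂ := fun p =>
  2 * !![0, 1; -1, 0] p.1.1 p.1.2 * !![0, 1; -1, 0] p.2.1 p.2.2

/-- explicit form of X⁻¹ -/
def Yv (t : ℂ) : Matrix (Fin 2 × Fin 2) (Fin 2 × Fin 2) ℂ :=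
  Matrix.of fun p p' => if p.1 = p'.2 ∧ p.2 = p'.1 then (if p.1 = p.2 then t else t⁻¹) else 0

lemma VinvV : Vinv * Vmat = 1 := by
  ext i j
  fin_cases i <;> fin_cases j <;>
    simp [Vinv, Vmat, Matrix.mul_apply, Fintype.sum_prod_type, Fin.sum_univ_two, pauli,
      Matrix.one_apply] <;> ring_nf <;> simp [Complex.I_sq]

lemma midX_mul (A B : Matrix (Fin 2 × Fin 2) (Fin 2 × Fin 2) ℂ) :
    midX A * midX B = midX (A * B) := by
  ext ⟨⟨a,b⟩,⟨c,d⟩⟩ ⟨⟨a',b'⟩,⟨c',d'⟩⟩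
  fin_cases a <;> fin_cases a' <;> fin_cases d <;> fin_cases d' <;>
    simp [midX, Matrix.mul_apply, Fintype.sum_prod_type, Fin.sum_univ_two] <;> ring

lemma midX_one : midX 1 = 1 := by
  ext ⟨⟨a,b⟩,⟨c,d⟩⟩ ⟨⟨a',b'⟩,⟨c',d'⟩⟩
  simp [midX, Matrix.one_apply, Prod.ext_iff]
  by_cases h1 : a = a' <;> by_cases h2 : b = b' <;> by_cases h3 : c = c' <;>
    by_cases h4 : d = d' <;> simp [h1, h2, h3, h4]

lemma hXY (t : ℂ) (ht : t ≠ 0) :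
    (flipM * toPair (Matrix.diagonal ![t⁻¹, t, t, t⁻¹])) * Yv t = 1 := by
  ext ⟨a,b⟩ ⟨a',b'⟩
  fin_cases a <;> fin_cases b <;> fin_cases a' <;> fin_cases b' <;>
    simp (config := { decide := true }) [flipM, toPair, pidx, Yv, Matrix.mul_apply,
      Fintype.sum_prod_type, Fin.sum_univ_two, Matrix.diagonal, Matrix.one_apply,
      Fin.ext_iff, Prod.ext_iff, ht, -Fin.val_eq_zero_iff]

lemma hW1 (t : ℂ) :
    (Vmat ⊗ₖ Vmat) *ᵥ (fun p => Matrix.diagonal ![t, -t⁻¹, -t⁻¹, -t] p.1 p.2) = w1v t := by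
  funext ⟨⟨a,b⟩,⟨c,d⟩⟩
  fin_cases a <;> fin_cases b <;> fin_cases c <;> fin_cases d <;>
    simp (config := { decide := true }) [Matrix.mulVec, dotProduct, Fintype.sum_prod_type,
      Fin.sum_univ_four, kroneckerMap_apply, Vmat, pauli, Matrix.diagonal, w1v,
      Prod.ext_iff, Fin.ext_iff, -Fin.val_eq_zero_iff] <;> ring

lemma hW2 (t : ℂ) (ht : t ≠ 0) : midX (Yv t) *ᵥ w1v t = w2v := by
  funext ⟨⟨a,b⟩,⟨c,d⟩⟩
  fin_cases a <;> fin_cases b <;> fin_cases c <;> fin_cases d <;>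
    simp (config := { decide := true }) [Matrix.mulVec, dotProduct, Fintype.sum_prod_type,
      Fin.sum_univ_two, midX, Yv, w1v, w2v, Prod.ext_iff, Fin.ext_iff, -Fin.val_eq_zero_iff] <;>
    field_simp

lemma hFix (s : ℂ) (hs : s = 1 ∨ s = -1) :
    (Lmat s 1 1 (fun p => !![0, 1; -1, 0] p.1 p.2) (fun p => !![0, -1; 1, 0] p.1 p.2) ⊗ₖ
      ((1:ℂ) • (flipM * Lmat s 1 1 (fun p => !![0, 1; -1, 0] p.1 p.2)
        (fun p => !![0, -1; 1, 0] p.1 p.2) * flipM))) *ᵥ w2v = w2v := by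
  have hLt : flipM * Lmat s 1 1 (fun p => !![0, 1; -1, 0] p.1 p.2)
      (fun p => !![0, -1; 1, 0] p.1 p.2) * flipM =
      Matrix.of (fun p p' => s * ((if p = p' then 1 else 0) +
        !![0, 1; -1, 0] p.2 p.1 * !![0, -1; 1, 0] p'.2 p'.1)) := by
    ext ⟨a,b⟩ ⟨c,d⟩
    fin_cases a <;> fin_cases b <;> fin_cases c <;> fin_cases d <;>
      simp (config := { decide := true }) [flipM, Lmat, Matrix.mul_apply,
        Fintype.sum_prod_type, Fin.sum_univ_two, Prod.ext_iff, Fin.ext_iff, -Fin.val_eq_zero_iff]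
  rw [hLt]
  rcases hs with h | h <;> subst h <;> funext ⟨⟨a,b⟩,⟨c,d⟩⟩ <;>
    fin_cases a <;> fin_cases b <;> fin_cases c <;> fin_cases d <;>
      simp (config := { decide := true }) [Matrix.mulVec, dotProduct, Fintype.sum_prod_type,
        Fin.sum_univ_two, Lmat, kroneckerMap_apply, w2v, Prod.ext_iff, Fin.ext_iff]

end RCase1Aux

open RCase1Aux in
/-- in case 1), for either s ∈ {1,-1}, Rg = g with
g = diag(t,-t⁻¹,-t⁻¹,-t) read as the vector (g^{ij}) ∈ ℂ¹⁶. -/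
theorem R_fixes_metric_case1 (t : ℝ) (ht0 : 0 < t) (ht1 : t ≤ 1)
    (s : ℂ) (hs : s = 1 ∨ s = -1) :
    ∀ i j : Fin 4, ∑ k : Fin 4, ∑ l : Fin 4,
        Rmat s 1 1 (fun p => !![0, 1; -1, 0] p.1 p.2) (fun p => !![0, -1; 1, 0] p.1 p.2)
            (flipM * toPair (Matrix.diagonal ![(t : ℂ)⁻¹, (t : ℂ), (t : ℂ), (t : ℂ)⁻¹]))
            (i, j) (k, l) *
          Matrix.diagonal ![(t : ℂ), -(t : ℂ)⁻¹, -(t : ℂ)⁻¹, -(t : ℂ)] k l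
      = Matrix.diagonal ![(t : ℂ), -(t : ℂ)⁻¹, -(t : ℂ)⁻¹, -(t : ℂ)] i j := by
  have ht : (t : ℂ) ≠ 0 := Complex.ofReal_ne_zero.2 ht0.ne'
  have hXinv : (flipM * toPair (Matrix.diagonal ![(t : ℂ)⁻¹, (t : ℂ), (t : ℂ), (t : ℂ)⁻¹]))⁻¹
      = Yv (t : ℂ) := Matrix.inv_eq_right_inv (hXY (t : ℂ) ht)
  have key : Rmat s 1 1 (fun p => !![0, 1; -1, 0] p.1 p.2) (fun p => !![0, -1; 1, 0] p.1 p.2)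
      (flipM * toPair (Matrix.diagonal ![(t : ℂ)⁻¹, (t : ℂ), (t : ℂ), (t : ℂ)⁻¹]))
      *ᵥ (fun p => Matrix.diagonal ![(t : ℂ), -(t : ℂ)⁻¹, -(t : ℂ)⁻¹, -(t : ℂ)] p.1 p.2)
      = fun p => Matrix.diagonal ![(t : ℂ), -(t : ℂ)⁻¹, -(t : ℂ)⁻¹, -(t : ℂ)] p.1 p.2 := by
    unfold Rmat
    rw [hXinv]
    simp only [← Matrix.mulVec_mulVec]
    have hmid : midX (flipM * toPair (Matrix.diagonal ![(t : ℂ)⁻¹, (t : ℂ), (t : ℂ), (t : ℂ)⁻¹]))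
        *ᵥ w2v = w1v (t : ℂ) := by
      rw [← hW2 _ ht, Matrix.mulVec_mulVec, midX_mul, hXY _ ht, midX_one, Matrix.one_mulVec]
    rw [hW1, hW2 _ ht, hFix s hs, hmid, ← hW1 (t : ℂ), Matrix.mulVec_mulVec,
      ← Matrix.mul_kronecker_mul, VinvV, Matrix.one_kronecker_one, Matrix.one_mulVec]
  intro i j
  have hkey := congrFun key (i, j)
  simp only [Matrix.mulVec, dotProduct, Fintype.sum_prod_type] at hkey
  exact hkey
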